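/- For every ε > 0 there exists a constant C_ε > 0 such that if y ≥ C_ε, then for every s ∈ ℂ with Re s > −(log y)/(1+ε), the Laplace transform integral ∫₀^∞ e^{−sv}·λ_y(v) dv converges absolutely, i.e. ∫₀^∞ |e^{−sv}·λ_y(v)| dv < ∞. -/

import Mathlib

open Real Complex MeasureTheory Filter Set ArithmeticFunction

noncomputable section

/-- `IsDickman ρ` says that `ρ` is the Dickman function on `[0,∞)`,
extended by zero to the negative reals. -/
def IsDickman (ρ : ℝ → ℝ) : Prop :=
  ContinuousOn ρ (Set.Ici 0) ∧
  (∀ t : ℝ, t < 0 → ρ t = 0) ∧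
  (∀ t ∈ Set.Icc (0:ℝ) 1, ρ t = 1) ∧
  (∀ t : ℝ, 1 < t → HasDerivAt ρ (-(ρ (t - 1)) / t) t) ∧
  (∀ t : ℝ, 0 ≤ t → 0 < ρ t)

/-- `IsXi ξ` says that for each `u ≥ 1`, `ξ u` is the largest nonnegative solution of
`e^{ξ} = 1 + u·ξ` (for `u > 1` this is the unique positive solution, and `ξ 1 = 0`). -/
def IsXi (ξ : ℝ → ℝ) : Prop :=
  ∀ u : ℝ, 1 ≤ u → 0 ≤ ξ u ∧ Real.exp (ξ u) = 1 + u * ξ u ∧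
    ∀ v : ℝ, 0 ≤ v → Real.exp v = 1 + u * v → v ≤ ξ u

/-- `u = log x / log y`. -/
def smoothU (x y : ℝ) : ℝ := Real.log x / Real.log y

/-- `Ψ(x,y)`: the number of `y`-smooth positive integers up to `x`. -/
def Psi (x y : ℝ) : ℕ :=
  Nat.card {n : ℕ | 1 ≤ n ∧ (n : ℝ) ≤ x ∧ ∀ p : ℕ, p.Prime → p ∣ n → (p : ℝ) ≤ y}

/-- de Bruijn's `λ_y(u) = ∫ ρ(u − log t/log y) d(⌊t⌋/t)`, written via the decomposition of the
Riemann–Stieltjes measure `d(⌊t⌋/t)` into its jump part (a jump of `1/n` at each integer `n ≥ 1`)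
and its absolutely continuous part (`−⌊t⌋/t²  dt`).  The convention `λ_y(u) = λ_y(u+)` at points
with `y^u ∈ ℤ` is built in by extending `ρ` by zero to the negatives (so `ρ(0)=1` is used at the
jump at `t = y^u`). -/
def lamBruijn (ρ : ℝ → ℝ) (y u : ℝ) : ℝ :=
  (∑' n : ℕ+, ρ (u - Real.log n / Real.log y) / n)
    - ∫ t in Set.Ioi (1:ℝ), ρ (u - Real.log t / Real.log y) * (⌊t⌋ : ℝ) / t ^ 2

/-- `Λ(x,y) = x·λ_y(u)`. -/
def LamBruijn (ρ : ℝ → ℝ) (x y : ℝ) : ℝ := x * lamBruijn ρ y (smoothU x y)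

/-- `I(s) = ∫₀^s (e^v − 1)/v dv`, along the segment from `0` to `s`
(parametrized by `v = t·s`, `t ∈ [0,1]`). -/
def Ifun (s : ℂ) : ℂ := ∫ t in (0:ℝ)..1, (Complex.exp (t * s) - 1) / t

/-- The partial zeta function `ζ(s,y) = ∏_{p ≤ y} (1 − p^{−s})⁻¹`. -/
def zetaSmooth (s : ℂ) (y : ℝ) : ℂ :=
  ∏ p ∈ Nat.primesBelow (⌊y⌋₊ + 1), ((1 : ℂ) - (p : ℂ) ^ (-s))⁻¹

/-- The real-valued partial zeta function, for real arguments. -/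
def zetaSmoothR (s y : ℝ) : ℝ :=
  ∏ p ∈ Nat.primesBelow (⌊y⌋₊ + 1), ((1 : ℝ) - (p : ℝ) ^ (-s))⁻¹

/-- `F(s,y) = exp(γ + I((1−s) log y))·ζ(s)·(s−1)·log y`. -/
def Ffun (s : ℂ) (y : ℝ) : ℂ :=
  Complex.exp ((Real.eulerMascheroniConstant : ℂ) + Ifun ((1 - s) * Real.log y)) *
    riemannZeta s * (s - 1) * (Real.log y : ℂ)

/-- `G(s,y) = ζ(s,y)/F(s,y)`. -/
def Gfun (s : ℂ) (y : ℝ) : ℂ := zetaSmooth s y / Ffun s y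

/-- The saddle point `β = 1 − ξ(u)/log y`. -/
def betaSaddle (ξ : ℝ → ℝ) (x y : ℝ) : ℝ := 1 - ξ (smoothU x y) / Real.log y

/-- Chebyshev's function `ψ(y) = ∑_{n ≤ y} Λ(n)`. -/
def chebyshevPsi (y : ℝ) : ℝ := ∑ n ∈ Finset.Icc 1 ⌊y⌋₊, ArithmeticFunction.vonMangoldt n

/-- A nontrivial zero of the Riemann zeta function. -/
def IsNontrivialZetaZero (z : ℂ) : Prop := riemannZeta z = 0 ∧ 0 < z.re ∧ z.re < 1

/-- The multiplicity of `z` as a zero of `ζ`: the largest `n` such that `ζ(s) = (s−z)^n·g(s)`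
near `z` with `g` analytic. -/
def zetaZeroOrder (z : ℂ) : ℕ :=
  sSup {n : ℕ | ∃ g : ℂ → ℂ, AnalyticAt ℂ g z ∧
    ∀ᶠ s in nhds z, riemannZeta s = (s - z) ^ n * g s}

/-- `∑_{ρ : |ρ| ≤ T} f(ρ)`, the sum over nontrivial zeros of `ζ` of modulus at most `T`,
counted with multiplicity (the sum is in fact finite). -/
def zetaZeroSum (T : ℝ) (f : ℂ → ℂ) : ℂ :=
  ∑' z : {z : ℂ // IsNontrivialZetaZero z ∧ ‖z‖ ≤ T},
    (zetaZeroOrder z : ℂ) * f z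

/-- `(1/2πi) ∫_{β−iT}^{β+iT} f(s) ds`, the integral along the vertical segment `Re s = β`. -/
def vlineIntegral (β T : ℝ) (f : ℂ → ℂ) : ℂ :=
  (2 * Real.pi : ℂ)⁻¹ * ∫ t in (-T)..T, f (β + t * Complex.I)

/-- `K(t) = t·ζ(t+1)/(t+1)`. -/
def Kfun (t : ℂ) : ℂ := t * riemannZeta (t + 1) / (t + 1)

/-- `L(y) = exp((log y)^{3/5} (log log y)^{−1/5})`. -/
def Lfun (y : ℝ) : ℝ :=
  Real.exp ((Real.log y) ^ ((3:ℝ)/5) * (Real.log (Real.log y)) ^ (-(1:ℝ)/5))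

/-- The Linear Independence hypothesis for `ζ`: the positive imaginary parts of the
nontrivial zeros are linearly independent over `ℚ`. -/
def ZetaLinearIndependence : Prop :=
  LinearIndependent ℚ
    (fun t : {t : ℝ // 0 < t ∧ ∃ z : ℂ, IsNontrivialZetaZero z ∧ z.im = t} => (t : ℝ))

/-- The entire function `ζ(s)(s−1)` (with its removable singularity at `s = 1` filled in). -/
def zetaTimesSMinusOne (s : ℂ) : ℂ := if s = 1 then 1 else riemannZeta s * (s - 1)


/-- `max_{|v| ≤ r} |f(v)|`. -/
def maxAbsOn (f : ℝ → ℂ) (r : ℝ) : ℝ :=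
  sSup ((fun v => ‖f v‖) '' Set.Icc (-r) r)

/-- A convex zero-free (for `ζ(s)(s−1)`) neighbourhood of the strip
`{0 ≤ Re s ≤ 1, |Im s| ≤ 1}` together with the real ray `(1,∞)`, on which the
branch of `log(ζ(s)(s−1))` that is real for real `s > 1` is well defined. -/
def branchDomain1 : Set ℂ := {s : ℂ | -1 ≤ s.re ∧ |s.im| ≤ 2}

/-- Under RH, `ζ(s)(s−1)` is also zero-free on `{Re s ≥ 2/3}`; the branch of
`log(ζ(s)(s−1))` extends there. -/
def branchDomain2 : Set ℂ := branchDomain1 ∪ {s : ℂ | 2/3 ≤ s.re}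

/-- `log G₁(s,y) = ∑_{n ≤ y} Λ(n)/(n^s log n) − (log(ζ(s)(s−1)) + log log y + γ + I((1−s)log y))`,
where `lz` is the branch of `log(ζ(s)(s−1))` that is real for real `s > 1`. -/
def logG1 (lz : ℂ → ℂ) (y : ℝ) (s : ℂ) : ℂ :=
  (∑ n ∈ Finset.Icc 1 ⌊y⌋₊,
      (ArithmeticFunction.vonMangoldt n : ℂ) / ((n : ℂ) ^ s * (Real.log n : ℂ)))
    - (lz s + (Real.log (Real.log y) : ℂ) + (Real.eulerMascheroniConstant : ℂ)
        + Ifun ((1 - s) * (Real.log y : ℂ)))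

namespace LamAux

variable {ρ : ℝ → ℝ}

lemma rho_nonneg (hd : IsDickman ρ) (t : ℝ) : 0 ≤ ρ t := by
  rcases lt_or_ge t 0 with h | h
  · rw [hd.2.1 t h]
  · exact (hd.2.2.2.2 t h).le

lemma rho_zero (hd : IsDickman ρ) : ρ 0 = 1 := hd.2.2.1 0 ⟨le_rfl, zero_le_one⟩

lemma rho_one (hd : IsDickman ρ) : ρ 1 = 1 := hd.2.2.1 1 ⟨zero_le_one, le_rfl⟩

lemma rho_meas (hd : IsDickman ρ) : Measurable ρ := by
  have hco : Continuous fun t : ℝ => ρ (max t 0) :=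
    hd.1.comp_continuous (continuous_id.max continuous_const) fun x => Set.mem_Ici.2 (le_max_right _ _)
  have hrw : ρ = fun t => if t < 0 then 0 else ρ (max t 0) := by
    funext t
    split_ifs with h
    · exact hd.2.1 t h
    · rw [max_eq_left (not_lt.1 h)]
  rw [hrw]
  exact Measurable.ite measurableSet_Iio measurable_const hco.measurable

lemma rho_anti (hd : IsDickman ρ) : AntitoneOn ρ (Set.Ici 0) := by
  have h1 : AntitoneOn ρ (Set.Ici 1) := by
    apply antitoneOn_of_deriv_nonpos (convex_Ici 1)
      (hd.1.mono (Set.Ici_subset_Ici.2 zero_le_one))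
    · intro x hx
      rw [interior_Ici] at hx
      exact (hd.2.2.2.1 x hx).differentiableAt.differentiableWithinAt
    · intro x hx
      rw [interior_Ici] at hx
      have hx1 : 1 < x := hx
      rw [(hd.2.2.2.1 x hx1).deriv]
      apply div_nonpos_of_nonpos_of_nonneg
      · simp [rho_nonneg hd]
      · linarith
  intro a ha b hb hab
  rcases le_or_gt b 1 with h | h
  · rw [hd.2.2.1 a ⟨ha, hab.trans h⟩, hd.2.2.1 b ⟨hb, h⟩]
  rcases le_or_gt 1 a with h' | h'
  · exact h1 h' h.le hab
  · calc ρ b ≤ ρ 1 := h1 (Set.mem_Ici.2 le_rfl) h.le h.le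
      _ = ρ a := by rw [rho_one hd, hd.2.2.1 a ⟨ha, h'.le⟩]

lemma rho_le_one (hd : IsDickman ρ) (t : ℝ) : ρ t ≤ 1 := by
  rcases lt_or_ge t 0 with h | h
  · rw [hd.2.1 t h]; exact zero_le_one
  · calc ρ t ≤ ρ 0 := rho_anti hd (Set.mem_Ici.2 le_rfl) h h
      _ = 1 := rho_zero hd

lemma integrableOn_of_bounded {f : ℝ → ℝ} (hf : Measurable f) {s : Set ℝ}
    (hs : MeasurableSet s) (hμ : volume s < ⊤) {M : ℝ} (hM : ∀ x ∈ s, |f x| ≤ M) :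
    IntegrableOn f s := by
  apply Integrable.mono' (g := fun _ => M) (integrableOn_const hμ.ne)
    hf.aestronglyMeasurable
  rw [ae_restrict_iff' hs]
  exact ae_of_all _ fun x hx => by simpa [Real.norm_eq_abs] using hM x hx

lemma rho_intervalIntegrable (hd : IsDickman ρ) (a b : ℝ) :
    IntervalIntegrable ρ volume a b := by
  rw [intervalIntegrable_iff]
  exact integrableOn_of_bounded (rho_meas hd) measurableSet_Ioc measure_Ioc_lt_top
    (M := 1) (fun x _ => by
      rw [_root_.abs_of_nonneg (rho_nonneg hd x)]; exact rho_le_one hd x)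

lemma rho_eq_integral (hd : IsDickman ρ) {t : ℝ} (ht : 1 ≤ t) :
    t * ρ t = ∫ x in (t-1)..t, ρ x := by
  set F : ℝ → ℝ := fun u => ∫ x in (0:ℝ)..u, ρ x with hF
  have hFcont : Continuous F := by
    apply intervalIntegral.continuous_primitive (fun a b => rho_intervalIntegrable hd a b)
  set H : ℝ → ℝ := fun u => u * ρ u - (F u - F (u - 1)) with hH
  have hHd : ∀ x ∈ interior (Set.Ici (1:ℝ)), HasDerivAt H 0 x := by
    intro x hx
    rw [interior_Ici] at hx
    have hxx : 1 < x := hx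
    have hx0 : (0:ℝ) < x := by linarith
    have hx1 : (0:ℝ) < x - 1 := by linarith
    have hd1 : HasDerivAt (fun u => u * ρ u) (1 * ρ x + x * (-(ρ (x - 1)) / x)) x :=
      (hasDerivAt_id x).mul (hd.2.2.2.1 x hxx)
    have hmeas : StronglyMeasurableAtFilter ρ (nhds x) :=
      (rho_meas hd).stronglyMeasurable.stronglyMeasurableAtFilter
    have hmeas' : StronglyMeasurableAtFilter ρ (nhds (x-1)) :=
      (rho_meas hd).stronglyMeasurable.stronglyMeasurableAtFilter
    have hcx : ContinuousAt ρ x := hd.1.continuousAt (Ici_mem_nhds hx0)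
    have hcx1 : ContinuousAt ρ (x - 1) := hd.1.continuousAt (Ici_mem_nhds hx1)
    have hd2 : HasDerivAt F (ρ x) x :=
      intervalIntegral.integral_hasDerivAt_right (rho_intervalIntegrable hd 0 x) hmeas hcx
    have hd3' : HasDerivAt F (ρ (x-1)) (x-1) :=
      intervalIntegral.integral_hasDerivAt_right (rho_intervalIntegrable hd 0 (x-1)) hmeas' hcx1
    have hd3 : HasDerivAt (fun u => F (u - 1)) (ρ (x-1) * 1) x :=
      HasDerivAt.comp (h₂ := F) (h := fun u => u - 1) x hd3' ((hasDerivAt_id' x).sub_const 1)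
    have := hd1.sub (hd2.sub hd3)
    convert this using 1
    · rfl
    · rfl
    · rfl
    · rw [mul_div_assoc', mul_div_cancel_left₀ _ hx0.ne']
      ring
  have hHcont : ContinuousOn H (Set.Ici 1) := by
    apply ContinuousOn.sub
    · exact continuousOn_id.mul (hd.1.mono (Set.Ici_subset_Ici.2 zero_le_one))
    · exact (hFcont.sub (hFcont.comp (continuous_id.sub continuous_const))).continuousOn
  have hanti : AntitoneOn H (Set.Ici 1) := by
    apply antitoneOn_of_deriv_nonpos (convex_Ici 1) hHcont
    · intro x hx; exact (hHd x hx).differentiableAt.differentiableWithinAt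
    · intro x hx; rw [(hHd x hx).deriv]
  have hmono : MonotoneOn H (Set.Ici 1) := by
    apply monotoneOn_of_deriv_nonneg (convex_Ici 1) hHcont
    · intro x hx; exact (hHd x hx).differentiableAt.differentiableWithinAt
    · intro x hx; rw [(hHd x hx).deriv]
  have h1 : H t = H 1 := le_antisymm (hanti (Set.mem_Ici.2 le_rfl) ht ht) (hmono (Set.mem_Ici.2 le_rfl) ht ht)
  have hH1 : H 1 = 0 := by
    have hint1 : ∫ x in (0:ℝ)..1, ρ x = 1 := by
      rw [intervalIntegral.integral_congr (g := fun _ => (1:ℝ))]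
      · simp
      · intro x hx
        rw [Set.uIcc_of_le (zero_le_one)] at hx
        exact hd.2.2.1 x hx
    simp only [hH, hF]
    rw [rho_one hd]
    simp [hint1]
  have := h1.trans hH1
  simp only [hH] at this
  have h2 : F t - F (t - 1) = ∫ x in (t-1)..t, ρ x := by
    simp only [hF]
    rw [← intervalIntegral.integral_interval_sub_left (rho_intervalIntegrable hd 0 t)
      (rho_intervalIntegrable hd 0 (t-1))]
  linarith [this, h2]

lemma rho_step (hd : IsDickman ρ) {t : ℝ} (ht : 1 ≤ t) : t * ρ t ≤ ρ (t - 1) := by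
  rw [rho_eq_integral hd ht]
  have h1 : ∫ x in (t-1)..t, ρ x ≤ ∫ x in (t-1)..t, ρ (t-1) := by
    apply intervalIntegral.integral_mono_on (by linarith) (rho_intervalIntegrable hd _ _)
      intervalIntegrable_const
    intro x hx
    have hx1 := hx.1
    exact rho_anti hd (Set.mem_Ici.2 (by linarith)) (Set.mem_Ici.2 (by linarith)) hx1
  simpa using h1

lemma rho_factorial (hd : IsDickman ρ) : ∀ n : ℕ, ∀ t : ℝ, (n : ℝ) ≤ t → ρ t ≤ 1 / n.factorial := by
  intro n
  induction n with
  | zero => intro t ht; simpa using rho_le_one hd t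
  | succ n ih =>
    intro t ht
    have hn1 : (1:ℝ) ≤ (n:ℝ) + 1 := by have := Nat.cast_nonneg (α:=ℝ) n; linarith
    have htn : ((n:ℝ)+1) ≤ t := by push_cast at ht; linarith
    have ht1 : (1:ℝ) ≤ t := le_trans hn1 htn
    have ht0 : (0:ℝ) < t := by linarith
    have h1 : t * ρ t ≤ 1 / n.factorial :=
      (rho_step hd ht1).trans (ih (t-1) (by linarith))
    have h2 : ρ t ≤ (1 / n.factorial) / t := by
      rw [le_div_iff₀ ht0]; linarith [h1]
    calc ρ t ≤ (1 / n.factorial) / t := h2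
      _ ≤ (1 / n.factorial) / ((n:ℝ)+1) := by
          apply div_le_div_of_nonneg_left _ (by positivity) htn
          positivity
      _ = 1 / (n+1).factorial := by
          rw [Nat.factorial_succ]
          push_cast
          rw [div_div]
          ring_nf
  
lemma rho_exp_decay (hd : IsDickman ρ) {b : ℝ} (hb : 0 ≤ b) (t : ℝ) :
    ρ t ≤ Real.exp (Real.exp b + b) * Real.exp (-(b * t)) := by
  rcases lt_or_ge t 0 with h | h
  · rw [hd.2.1 t h]; positivity
  set n := ⌊t⌋₊ with hn
  have h1 : (n : ℝ) ≤ t := Nat.floor_le h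
  have h2 : t < n + 1 := Nat.lt_floor_add_one t
  have hfac : Real.exp b ^ n / n.factorial ≤ Real.exp (Real.exp b) := by
    calc Real.exp b ^ n / n.factorial ≤ ∑ i ∈ Finset.range (n+1), Real.exp b ^ i / i.factorial := by
          apply Finset.single_le_sum (f := fun i => Real.exp b ^ i / (i.factorial : ℝ))
            (fun i _ => by positivity) (Finset.self_mem_range_succ n)
      _ ≤ Real.exp (Real.exp b) := Real.sum_le_exp_of_nonneg (Real.exp_nonneg b) _
  have hexpn : Real.exp b ^ n = Real.exp (b * n) := by
    rw [← Real.exp_nat_mul]; ring_nf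
  have hfac2 : (1 : ℝ) / n.factorial ≤ Real.exp (Real.exp b) * Real.exp (-(b * n)) := by
    have heq : (1:ℝ)/n.factorial = (Real.exp b ^ n / n.factorial) * Real.exp (-(b*(n:ℝ))) := by
      rw [hexpn, div_mul_eq_mul_div, ← Real.exp_add]
      ring_nf
      rw [Real.exp_zero, mul_one]
    rw [heq]
    exact mul_le_mul_of_nonneg_right hfac (Real.exp_nonneg _)
  have h3 : Real.exp (-(b * n)) ≤ Real.exp b * Real.exp (-(b * t)) := by
    rw [← Real.exp_add]
    apply Real.exp_le_exp.2
    nlinarith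
  calc ρ t ≤ 1 / n.factorial := rho_factorial hd n t h1
    _ ≤ Real.exp (Real.exp b) * Real.exp (-(b * n)) := hfac2
    _ ≤ Real.exp (Real.exp b) * (Real.exp b * Real.exp (-(b * t))) :=
        mul_le_mul_of_nonneg_left h3 (Real.exp_nonneg _)
    _ = Real.exp (Real.exp b + b) * Real.exp (-(b * t)) := by rw [Real.exp_add]; ring

lemma rho_lip (hd : IsDickman ρ) {a c : ℝ} (ha : 0 ≤ a) (hac : a ≤ c) :
    ρ a - ρ c ≤ (c - a) * ρ (max (a - 1) 0) := by
  have hc0 : (0:ℝ) ≤ c := le_trans ha hac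
  set a' := max a 1 with ha'
  set c' := max c 1 with hc'
  have ha'1 : 1 ≤ a' := le_max_right _ _
  have hc'1 : 1 ≤ c' := le_max_right _ _
  have ha'c' : a' ≤ c' := max_le_max hac le_rfl
  have hρa : ρ a = ρ a' := by
    rcases le_or_gt 1 a with h | h
    · rw [ha', max_eq_left h]
    · rw [ha', max_eq_right h.le, hd.2.2.1 a ⟨ha, h.le⟩, rho_one hd]
  have hρc : ρ c = ρ c' := by
    rcases le_or_gt 1 c with h | h
    · rw [hc', max_eq_left h]
    · rw [hc', max_eq_right h.le, hd.2.2.1 c ⟨hc0, h.le⟩, rho_one hd]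
  have hdiff : c' - a' ≤ c - a := by
    rcases le_or_gt 1 c with h | h
    · rw [hc', max_eq_left h]
      have : a ≤ a' := le_max_left _ _
      linarith
    · rw [hc', max_eq_right h.le]
      have : a' = 1 := by
        rw [ha', max_eq_right]
        linarith
      rw [this]
      linarith
  rcases eq_or_lt_of_le ha'c' with h | h
  · rw [hρa, hρc, h, sub_self]
    have : (0:ℝ) ≤ ρ (max (a-1) 0) := rho_nonneg hd _
    nlinarith
  · obtain ⟨x, hx, hslope⟩ := exists_hasDerivAt_eq_slope ρ (fun x => -(ρ (x-1))/x) h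
      (hd.1.mono (fun z hz => by
        have := hz.1
        exact Set.mem_Ici.2 (by
          rw [Set.mem_Icc] at hz
          linarith [hz.1, ha'1])))
      (fun z hz => hd.2.2.2.1 z (lt_of_le_of_lt ha'1 hz.1))
    have hx1 : 1 < x := lt_of_le_of_lt ha'1 hx.1
    have heq : ρ c' - ρ a' = -(ρ (x-1))/x * (c' - a') := by
      rw [hslope, div_mul_cancel₀ _ (sub_ne_zero.2 h.ne')]
    have hbound : ρ (x-1) / x ≤ ρ (max (a-1) 0) := by
      have h1 : ρ (x-1) / x ≤ ρ (x-1) := by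
        apply div_le_self (rho_nonneg hd _) (by linarith)
      apply h1.trans
      apply rho_anti hd (Set.mem_Ici.2 (le_max_right _ _)) (Set.mem_Ici.2 (by
        have : a' - 1 ≤ x - 1 := by linarith [hx.1]
        linarith [hx1]))
      apply max_le
      · have : a ≤ a' := le_max_left _ _
        linarith [hx.1]
      · linarith
    have hnn : 0 ≤ ρ (x - 1) := rho_nonneg hd _
    rw [hρa, hρc]
    have : ρ a' - ρ c' = ρ (x-1)/x * (c' - a') := by
      rw [← neg_sub (ρ a') (ρ c')] at heq
      have := heq
      field_simp at this ⊢
      linarith [this]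
    rw [this]
    calc ρ (x-1)/x * (c' - a') ≤ ρ (max (a-1) 0) * (c' - a') :=
        mul_le_mul_of_nonneg_right hbound (by linarith)
      _ ≤ ρ (max (a-1) 0) * (c - a) :=
        mul_le_mul_of_nonneg_left hdiff (rho_nonneg hd _)
      _ = (c - a) * ρ (max (a-1) 0) := mul_comm _ _

lemma tsum_pnat_shift (f : ℝ → ℝ) :
    ∑' n : ℕ+, f ((n : ℕ) : ℝ) = ∑' k : ℕ, f ((k : ℝ) + 1) := by
  rw [← Equiv.pnatEquivNat.symm.tsum_eq (fun n : ℕ+ => f ((n : ℕ) : ℝ))]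
  congr 1
  funext k
  simp [Equiv.pnatEquivNat, Nat.succPNat]

lemma arg_neg (hd : IsDickman ρ) {y : ℝ} (hy : 2 ≤ y) {v x : ℝ} (hx : y ^ v < x) :
    ρ (v - Real.log x / Real.log y) = 0 := by
  have hy0 : (0:ℝ) < y := by linarith
  have hly : 0 < Real.log y := Real.log_pos (by linarith)
  have h1 : v * Real.log y < Real.log x := by
    rw [← Real.log_rpow hy0 v]
    exact Real.log_lt_log (Real.rpow_pos_of_pos hy0 v) hx
  apply hd.2.1
  rw [sub_neg, lt_div_iff₀ hly]
  linarith

lemma lam_meas (hd : IsDickman ρ) {y : ℝ} (hy : 2 ≤ y) : Measurable (lamBruijn ρ y) := by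
  have hy0 : (0:ℝ) < y := by linarith
  have hly : 0 < Real.log y := Real.log_pos (by linarith)
  have hm1 : Measurable (fun v => ∑' k : ℕ,
      ρ (v - Real.log ((k:ℝ)+1) / Real.log y) / ((k:ℝ)+1)) := by
    apply measurable_of_tendsto_metrizable
      (f := fun m v => ∑ k ∈ Finset.range m, ρ (v - Real.log ((k:ℝ)+1) / Real.log y) / ((k:ℝ)+1))
    · intro m
      apply Finset.measurable_sum
      intro k _
      exact ((rho_meas hd).comp (measurable_id.sub_const _)).div_const _
    · rw [tendsto_pi_nhds]
      intro v
      apply Summable.hasSum ?_ |>.tendsto_sum_nat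
      apply summable_of_ne_finset_zero (s := Finset.range (⌊y ^ v⌋₊ + 1))
      intro k hk
      have hk' : ⌊y ^ v⌋₊ + 1 ≤ k := by simpa [Finset.mem_range, not_lt] using hk
      have h2 : y ^ v < (k:ℝ) + 1 := by
        have h3 : y ^ v < (⌊y ^ v⌋₊ : ℝ) + 1 := Nat.lt_floor_add_one _
        have h4 : ((⌊y ^ v⌋₊ : ℕ) : ℝ) + 1 ≤ (k : ℝ) := by exact_mod_cast hk'
        linarith
      rw [arg_neg hd hy h2, zero_div]
  have hsm : StronglyMeasurable
      (fun p : ℝ × ℝ => ρ (p.1 - Real.log p.2 / Real.log y) * ((⌊p.2⌋ : ℤ) : ℝ) / p.2 ^ 2) := by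
    apply Measurable.stronglyMeasurable
    apply Measurable.div
    · apply Measurable.mul
      · exact (rho_meas hd).comp (measurable_fst.sub
          ((Real.measurable_log.comp measurable_snd).div_const _))
      · have hfloor : Measurable (fun t : ℝ => ((⌊t⌋ : ℤ) : ℝ)) :=
          (measurable_from_top (f := fun z : ℤ => (z : ℝ))).comp Int.measurable_floor
        exact hfloor.comp measurable_snd
    · exact measurable_snd.pow_const 2
  have hm2 : Measurable (fun v => ∫ t in Set.Ioi (1:ℝ),
      ρ (v - Real.log t / Real.log y) * ((⌊t⌋ : ℤ) : ℝ) / t ^ 2) :=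
    (hsm.integral_prod_right' (ν := volume.restrict (Set.Ioi 1))).measurable
  have heq : lamBruijn ρ y = fun v =>
      (∑' k : ℕ, ρ (v - Real.log ((k:ℝ)+1) / Real.log y) / ((k:ℝ)+1))
      - ∫ t in Set.Ioi (1:ℝ), ρ (v - Real.log t / Real.log y) * ((⌊t⌋ : ℤ) : ℝ) / t ^ 2 := by
    funext v
    unfold lamBruijn
    congr 1
    exact tsum_pnat_shift (fun x => ρ (v - Real.log x / Real.log y) / x)
  rw [heq]
  exact hm1.sub hm2

lemma integral_inv_sq {n : ℝ} (hn : 0 < n) :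
    ∫ t in n..(n+1), (t^2)⁻¹ = n⁻¹ - (n+1)⁻¹ := by
  have hder : ∀ x ∈ Set.uIcc n (n+1), HasDerivAt (fun t => -t⁻¹) ((x^2)⁻¹) x := by
    intro x hx
    rw [Set.uIcc_of_le (by linarith)] at hx
    have hx0 : x ≠ 0 := ne_of_gt (lt_of_lt_of_le hn hx.1)
    have h := (hasDerivAt_inv hx0).neg
    simp only [neg_neg] at h
    exact h
  have hint : IntervalIntegrable (fun x => (x^2)⁻¹) volume n (n+1) := by
    apply ContinuousOn.intervalIntegrable
    apply ContinuousOn.inv₀ (continuousOn_id.pow 2)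
    intro x hx
    rw [Set.uIcc_of_le (by linarith)] at hx
    exact pow_ne_zero _ (ne_of_gt (lt_of_lt_of_le hn hx.1))
  rw [intervalIntegral.integral_eq_sub_of_hasDerivAt hder hint]
  ring

lemma interval_term_bound (hd : IsDickman ρ) (y v : ℝ) (k : ℕ) {M : ℝ}
    (hM : ∀ t ∈ Set.Icc ((k:ℝ)+1) ((k:ℝ)+2),
      |ρ (v - Real.log ((k:ℝ)+1) / Real.log y) - ρ (v - Real.log t / Real.log y)| ≤ M) :
    |ρ (v - Real.log ((k:ℝ)+1) / Real.log y) / ((k:ℝ)+1)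
      - ∫ t in ((k:ℝ)+1)..((k:ℝ)+2), ρ (v - Real.log t / Real.log y) * (⌊t⌋ : ℝ) / t ^ 2|
      ≤ (M + ρ (v - Real.log ((k:ℝ)+1) / Real.log y) / ((k:ℝ)+1)) / ((k:ℝ)+2) := by
  have hn1 : (1:ℝ) ≤ (k:ℝ)+1 := le_add_of_nonneg_left (Nat.cast_nonneg k)
  set n : ℝ := (k:ℝ)+1 with hn
  have hn0 : (0:ℝ) < n := by linarith
  have hne : (k:ℝ) + 2 = n + 1 := by rw [hn]; ring
  rw [hne] at hM ⊢
  have hM0 : 0 ≤ M := le_trans (abs_nonneg _) (hM n ⟨le_rfl, by linarith⟩)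
  set g : ℝ → ℝ := fun t => ρ (v - Real.log t / Real.log y) with hg
  have hgnn : ∀ t, 0 ≤ g t := fun t => rho_nonneg hd _
  have hg1 : ∀ t, g t ≤ 1 := fun t => rho_le_one hd _
  have hmeasg : Measurable fun t => g t / t^2 :=
    ((rho_meas hd).comp (measurable_const.sub (Real.measurable_log.div_const _))).div
      (measurable_id.pow_const 2)
  have hint_g : IntervalIntegrable (fun t => g t / t^2) volume n (n+1) := by
    rw [intervalIntegrable_iff, Set.uIoc_of_le (by linarith : n ≤ n+1)]
    apply integrableOn_of_bounded hmeasg measurableSet_Ioc measure_Ioc_lt_top (M := 1)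
    intro x hx
    have hx1 : 1 < x := lt_of_le_of_lt hn1 hx.1
    rw [abs_div, _root_.abs_of_nonneg (hgnn x), _root_.abs_of_nonneg (by positivity : (0:ℝ) ≤ x^2),
      div_le_one (by positivity)]
    nlinarith [hg1 x]
  have hcont_sq : ∀ c : ℝ, IntervalIntegrable (fun t => c / t^2) volume n (n+1) := by
    intro c
    apply ContinuousOn.intervalIntegrable
    apply continuousOn_const.div (continuousOn_id.pow 2)
    intro x hx
    rw [Set.uIcc_of_le (by linarith)] at hx
    exact pow_ne_zero _ (ne_of_gt (lt_of_lt_of_le hn0 hx.1))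
  have hconst_val : ∀ c : ℝ, ∫ t in n..(n+1), c / t^2 = c * (n⁻¹ - (n+1)⁻¹) := by
    intro c
    simp only [div_eq_mul_inv]
    rw [intervalIntegral.integral_const_mul, integral_inv_sq hn0]
  have hae : ∀ᵐ x : ℝ ∂(volume : Measure ℝ), x ≠ n+1 := by
    have h0 : ∀ᵐ x : ℝ ∂(volume : Measure ℝ), x ∈ ({n+1}ᶜ : Set ℝ) :=
      compl_mem_ae_iff.2 (measure_singleton _)
    filter_upwards [h0] with x hx
    simpa using hx
  have hfloor_eq : ∫ t in n..(n+1), g t * (⌊t⌋ : ℝ) / t^2 = n * ∫ t in n..(n+1), g t / t^2 := by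
    rw [← intervalIntegral.integral_const_mul]
    apply intervalIntegral.integral_congr_ae
    filter_upwards [hae] with x hxne hx
    rw [Set.uIoc_of_le (by linarith : n ≤ n+1)] at hx
    have hxlt : x < n + 1 := lt_of_le_of_ne hx.2 hxne
    have hfl : ⌊x⌋ = (k:ℤ) + 1 := by
      rw [Int.floor_eq_iff]
      constructor
      · push_cast; rw [hn] at hx; linarith [hx.1]
      · push_cast; rw [hn] at hxlt; linarith
    rw [hfl]
    push_cast
    rw [hn]
    ring
  have hdecomp : g n / n - n * ∫ t in n..(n+1), g t / t^2
      = n * (∫ t in n..(n+1), (g n / t^2 - g t / t^2)) + g n / (n*(n+1)) := by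
    rw [intervalIntegral.integral_sub (hcont_sq (g n)) hint_g, hconst_val]
    field_simp
    ring
  have habs : |∫ t in n..(n+1), (g n / t^2 - g t / t^2)| ≤ M * (n⁻¹ - (n+1)⁻¹) := by
    apply (intervalIntegral.abs_integral_le_integral_abs (by linarith)).trans
    rw [← hconst_val M]
    apply intervalIntegral.integral_mono_on (by linarith) ((hcont_sq (g n)).sub hint_g).abs
      (hcont_sq M)
    intro x hx
    have hx0 : 0 < x := lt_of_lt_of_le hn0 hx.1
    rw [← sub_div, abs_div, _root_.abs_of_nonneg (by positivity : (0:ℝ) ≤ x^2)]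
    gcongr
    exact hM x hx
  have hgoal : |g n / n - ∫ t in n..(n+1), g t * (⌊t⌋ : ℝ) / t^2|
      ≤ (M + g n / n) / (n+1) := by
    rw [hfloor_eq, hdecomp]
    have h1 : |n * (∫ t in n..(n+1), (g n / t^2 - g t / t^2)) + g n / (n*(n+1))|
        ≤ n * (M * (n⁻¹ - (n+1)⁻¹)) + g n / (n*(n+1)) := by
      apply (abs_add_le _ _).trans
      have h2 : |n * ∫ t in n..(n+1), (g n / t^2 - g t / t^2)| ≤ n * (M * (n⁻¹ - (n+1)⁻¹)) := by
        rw [abs_mul, _root_.abs_of_nonneg hn0.le]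
        exact mul_le_mul_of_nonneg_left habs hn0.le
      have h3 : |g n / (n*(n+1))| = g n / (n*(n+1)) :=
        _root_.abs_of_nonneg (div_nonneg (hgnn n) (by positivity))
      rw [h3]
      linarith
    apply h1.trans
    apply le_of_eq
    field_simp
    ring
  exact hgoal

set_option maxHeartbeats 1000000 in
lemma lam_decay (hd : IsDickman ρ) {y : ℝ} (hy : 2 ≤ y) {b : ℝ} (hb0 : 0 < b)
    (hbl : b < Real.log y) :
    ∃ K : ℝ, 0 < K ∧ ∀ v : ℝ, 0 < v → |lamBruijn ρ y v| ≤ K * Real.exp (-(b * v)) := by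
  have hy0 : (0:ℝ) < y := by linarith
  have hy1 : (1:ℝ) < y := by linarith
  have hl0 : 0 < Real.log y := Real.log_pos hy1
  set θ : ℝ := b / Real.log y with hθ
  have hθ0 : 0 < θ := div_pos hb0 hl0
  have hθ1 : θ < 1 := (div_lt_one hl0).2 hbl
  set Cb : ℝ := Real.exp (Real.exp b + b) with hCb
  have hCb0 : 0 < Cb := Real.exp_pos _
  have hsum : Summable (fun k : ℕ => ((k:ℝ)+2) ^ (θ - 2)) := by
    have h1 : Summable (fun n : ℕ => ((n:ℝ)) ^ (θ - 2)) :=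
      Real.summable_nat_rpow.2 (by linarith)
    have h2 := h1.comp_injective (add_right_injective 2)
    apply h2.congr
    intro k
    simp only [Function.comp_apply]
    push_cast
    ring_nf
  set Kθ : ℝ := ∑' k : ℕ, ((k:ℝ)+2) ^ (θ - 2) with hKθ
  have hKθ0 : 0 ≤ Kθ := tsum_nonneg fun k => Real.rpow_nonneg (by positivity) _
  set K1 : ℝ := 2 * Cb * Real.exp b * (1/Real.log y + 1) with hK1
  have hK10 : 0 < K1 := by positivity
  refine ⟨K1 * Kθ + 4 * Cb, by positivity, ?_⟩
  intro v hv
  set E : ℝ := Real.exp (-(b * v)) with hE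
  have hE0 : 0 < E := Real.exp_pos _
  have hyv0 : (0:ℝ) < y ^ v := Real.rpow_pos_of_pos hy0 v
  have hyv1 : (1:ℝ) < y ^ v := (Real.one_lt_rpow_iff_of_pos hy0).2 (Or.inl ⟨hy1, hv⟩)
  set N := ⌊y ^ v⌋₊ with hN
  have hN1 : 1 ≤ N := Nat.le_floor (by exact_mod_cast hyv1.le)
  have hNle : (N:ℝ) ≤ y ^ v := Nat.floor_le hyv0.le
  have hNgt : y ^ v < (N:ℝ) + 1 := Nat.lt_floor_add_one _
  set g : ℝ → ℝ := fun t => ρ (v - Real.log t / Real.log y) with hg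
  -- uniform upper bound: g t ≤ Cb * E * m ^ θ whenever 0 < t ≤ m, 1 ≤ m
  have hgle : ∀ m : ℝ, 1 ≤ m → ∀ t : ℝ, 0 < t → t ≤ m → g t ≤ Cb * E * m ^ θ := by
    intro m hm t ht htm
    have h1 : g t ≤ Cb * Real.exp (-(b * (v - Real.log t / Real.log y))) :=
      rho_exp_decay hd hb0.le _
    apply h1.trans
    have hm0 : (0:ℝ) < m := by linarith
    have hlog : Real.log t ≤ Real.log m := Real.log_le_log ht htm
    have hrw : Cb * E * m ^ θ = Cb * Real.exp (-(b*v) + θ * Real.log m) := by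
      rw [Real.rpow_def_of_pos hm0, hE, mul_assoc, ← Real.exp_add, mul_comm (Real.log m) θ]
    rw [hrw]
    apply mul_le_mul_of_nonneg_left _ hCb0.le
    apply Real.exp_le_exp.2
    have h6 : b * (Real.log t / Real.log y) = θ * Real.log t := by
      rw [hθ]; field_simp
    have h7 : -(b * (v - Real.log t / Real.log y)) = -(b*v) + b * (Real.log t / Real.log y) := by
      ring
    linarith [mul_le_mul_of_nonneg_left hlog hθ0.le]
  -- Lipschitz bound on interior intervals
  have hglip : ∀ n : ℝ, 1 ≤ n → n + 1 ≤ y ^ v → ∀ t ∈ Set.Icc n (n+1),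
      |g n - g t| ≤ 1/(n * Real.log y) * (Cb * Real.exp b * E * (n+1) ^ θ) := by
    intro n hn hn1 t ht
    have hn0 : (0:ℝ) < n := by linarith
    have ht0 : (0:ℝ) < t := by linarith [ht.1]
    have hlogn : Real.log n ≤ Real.log t := Real.log_le_log hn0 ht.1
    have hlogt : Real.log t ≤ Real.log (n+1) := Real.log_le_log ht0 ht.2
    have hac : v - Real.log t / Real.log y ≤ v - Real.log n / Real.log y := by
      apply sub_le_sub_left
      exact (div_le_div_iff_of_pos_right hl0).2 hlogn
    have ha0 : 0 ≤ v - Real.log t / Real.log y := by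
      have h2 : Real.log t ≤ Real.log (y ^ v) :=
        Real.log_le_log ht0 (le_trans ht.2 hn1)
      rw [Real.log_rpow hy0] at h2
      rw [sub_nonneg, div_le_iff₀ hl0]
      linarith
    have hmono : ρ (v - Real.log n / Real.log y) ≤ ρ (v - Real.log t / Real.log y) :=
      rho_anti hd (Set.mem_Ici.2 ha0) (Set.mem_Ici.2 (le_trans ha0 hac)) hac
    have habs : |g n - g t|
        = ρ (v - Real.log t / Real.log y) - ρ (v - Real.log n / Real.log y) := by
      rw [hg]
      simp only []
      rw [abs_sub_comm, _root_.abs_of_nonneg (by linarith)]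
    rw [habs]
    have hlip := rho_lip hd ha0 hac
    apply hlip.trans
    have hca : (v - Real.log n / Real.log y) - (v - Real.log t / Real.log y)
        ≤ 1/(n * Real.log y) := by
      have heq : (v - Real.log n / Real.log y) - (v - Real.log t / Real.log y)
          = (Real.log t - Real.log n) / Real.log y := by ring
      rw [heq]
      have h3 : Real.log t - Real.log n ≤ 1/n := by
        have h4 : Real.log (n+1) - Real.log n ≤ 1/n := by
          rw [← Real.log_div (by linarith) (by linarith)]
          have h5 := Real.log_le_sub_one_of_pos (show (0:ℝ) < (n+1)/n by positivity)
          have heq2 : (n+1)/n - 1 = 1/n := by field_simp; ring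
          linarith
        linarith
      calc (Real.log t - Real.log n) / Real.log y ≤ (1/n) / Real.log y :=
            (div_le_div_iff_of_pos_right hl0).2 h3
        _ = 1/(n * Real.log y) := by rw [div_div]
    have hρm : ρ (max ((v - Real.log t / Real.log y) - 1) 0)
        ≤ Cb * Real.exp b * E * (n+1) ^ θ := by
      have h1 : ρ (max ((v - Real.log t / Real.log y) - 1) 0)
          ≤ Cb * Real.exp (-(b * max ((v - Real.log t / Real.log y) - 1) 0)) :=
        rho_exp_decay hd hb0.le _
      apply h1.trans
      have hmax : (v - Real.log t / Real.log y) - 1 ≤ max ((v - Real.log t / Real.log y) - 1) 0 :=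
        le_max_left _ _
      have h2 : -(b * max ((v - Real.log t / Real.log y) - 1) 0)
          ≤ -(b*v) + θ * Real.log (n+1) + b := by
        have h3 : -(b * max ((v - Real.log t / Real.log y) - 1) 0)
            ≤ -(b * ((v - Real.log t / Real.log y) - 1)) :=
          neg_le_neg (mul_le_mul_of_nonneg_left hmax hb0.le)
        have h4 : b * (Real.log t / Real.log y) = θ * Real.log t := by
          rw [hθ]; field_simp
        have h5 : θ * Real.log t ≤ θ * Real.log (n+1) :=
          mul_le_mul_of_nonneg_left (Real.log_le_log ht0 ht.2) hθ0.le
        have h6 : -(b * ((v - Real.log t / Real.log y) - 1))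
            = -(b*v) + b * (Real.log t / Real.log y) + b := by ring
        linarith
      calc Cb * Real.exp (-(b * max ((v - Real.log t / Real.log y) - 1) 0))
          ≤ Cb * Real.exp (-(b*v) + θ * Real.log (n+1) + b) :=
            mul_le_mul_of_nonneg_left (Real.exp_le_exp.2 h2) hCb0.le
        _ = Cb * Real.exp b * E * (n+1) ^ θ := by
            rw [hCb, hE, Real.rpow_def_of_pos (by linarith : (0:ℝ) < n+1)]
            simp only [← Real.exp_add]
            congr 1
            ring
    exact mul_le_mul hca hρm (rho_nonneg hd _) (by positivity)
  have heb1 : (1:ℝ) ≤ Real.exp b := Real.one_le_exp hb0.le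
  -- bound for "interior" intervals
  have hterm1 : ∀ k : ℕ, (k:ℝ) + 2 ≤ y ^ v →
      |g ((k:ℝ)+1) / ((k:ℝ)+1) - ∫ t in ((k:ℝ)+1)..((k:ℝ)+2), g t * (⌊t⌋ : ℝ) / t ^ 2|
        ≤ K1 * E * ((k:ℝ)+2) ^ (θ - 2) := by
    intro k hk
    have hn1 : (1:ℝ) ≤ (k:ℝ)+1 := le_add_of_nonneg_left (Nat.cast_nonneg k)
    set P : ℝ := ((k:ℝ)+2) ^ θ with hP
    have hP0 : 0 ≤ P := Real.rpow_nonneg (by positivity) _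
    set B : ℝ := Cb * Real.exp b * E * P with hB
    have hB0 : 0 ≤ B := by positivity
    set M : ℝ := 1/(((k:ℝ)+1) * Real.log y) * B with hMdef
    have hMb : ∀ t ∈ Set.Icc ((k:ℝ)+1) ((k:ℝ)+2),
        |g ((k:ℝ)+1) - g t| ≤ M := by
      intro t ht
      have h1 := hglip ((k:ℝ)+1) hn1 (by linarith) t ⟨ht.1, by linarith [ht.2]⟩
      apply h1.trans
      apply le_of_eq
      rw [hMdef, hB, hP]
      have : (k:ℝ)+1+1 = (k:ℝ)+2 := by ring
      rw [this]
    have hbd := interval_term_bound hd y v k (M := M) (by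
      intro t ht
      have := hMb t ht
      simpa only [hg] using this)
    have hgn : g ((k:ℝ)+1) ≤ Cb * E * P := by
      rw [hP]
      exact hgle ((k:ℝ)+2) (by linarith) ((k:ℝ)+1) (by linarith) (by linarith)
    have hgnB : g ((k:ℝ)+1) ≤ B := by
      rw [hB]
      nlinarith [mul_nonneg (mul_nonneg hCb0.le hE0.le) hP0]
    have hgnn' : 0 ≤ g ((k:ℝ)+1) := rho_nonneg hd _
    have hP2 : ((k:ℝ)+2) ^ (θ - 2) = P / ((k:ℝ)+2)^2 := by
      rw [hP, Real.rpow_sub (by positivity : (0:ℝ) < (k:ℝ)+2)]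
      congr 1
      rw [show (2:ℝ) = ((2:ℕ):ℝ) by norm_num, Real.rpow_natCast]
    have hkey : (M + g ((k:ℝ)+1) / ((k:ℝ)+1)) / ((k:ℝ)+2) ≤ K1 * E * ((k:ℝ)+2) ^ (θ - 2) := by
      have h2 : M + g ((k:ℝ)+1) / ((k:ℝ)+1) ≤ B * (1/Real.log y + 1) / ((k:ℝ)+1) := by
        have h3 : g ((k:ℝ)+1) / ((k:ℝ)+1) ≤ B / ((k:ℝ)+1) := by gcongr
        have h4 : M = B / (((k:ℝ)+1) * Real.log y) := by
          rw [hMdef]; ring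
        have h5 : B / (((k:ℝ)+1) * Real.log y) + B / ((k:ℝ)+1)
            = B * (1/Real.log y + 1) / ((k:ℝ)+1) := by
          field_simp
        linarith
      have h6 : (M + g ((k:ℝ)+1) / ((k:ℝ)+1)) / ((k:ℝ)+2)
          ≤ (B * (1/Real.log y + 1) / ((k:ℝ)+1)) / ((k:ℝ)+2) := by gcongr
      apply h6.trans
      rw [div_div]
      have h8 : 0 ≤ B * (1/Real.log y + 1) := by positivity
      have h9 : ((k:ℝ)+2)^2 ≤ 2*(((k:ℝ)+1)*((k:ℝ)+2)) := by
        have hkk : (0:ℝ) ≤ (k:ℝ) := Nat.cast_nonneg k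
        nlinarith
      have h7 : B * (1/Real.log y + 1) / (((k:ℝ)+1) * ((k:ℝ)+2))
          ≤ B * (1/Real.log y + 1) * 2 / (((k:ℝ)+2)^2) := by
        rw [div_le_div_iff₀ (by positivity) (by positivity)]
        calc B * (1/Real.log y + 1) * ((k:ℝ)+2)^2
            ≤ B * (1/Real.log y + 1) * (2*(((k:ℝ)+1)*((k:ℝ)+2))) :=
              mul_le_mul_of_nonneg_left h9 h8
          _ = B * (1/Real.log y + 1) * 2 * (((k:ℝ)+1)*((k:ℝ)+2)) := by ring
      apply h7.trans
      apply le_of_eq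
      rw [hP2, hK1, hB]
      ring
    exact hbd.trans hkey
  -- bound for the last interval
  have hterm2 : ∀ k : ℕ,
      |g ((k:ℝ)+1) / ((k:ℝ)+1) - ∫ t in ((k:ℝ)+1)..((k:ℝ)+2), g t * (⌊t⌋ : ℝ) / t ^ 2|
        ≤ 4 * Cb * E := by
    intro k
    have hn1 : (1:ℝ) ≤ (k:ℝ)+1 := le_add_of_nonneg_left (Nat.cast_nonneg k)
    set P : ℝ := ((k:ℝ)+2) ^ θ with hP
    have hP0 : 0 ≤ P := Real.rpow_nonneg (by positivity) _
    have hgleP : ∀ t ∈ Set.Icc ((k:ℝ)+1) ((k:ℝ)+2), g t ≤ Cb * E * P := by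
      intro t ht
      rw [hP]
      exact hgle ((k:ℝ)+2) (by linarith) t (by linarith [ht.1]) ht.2
    have hMb : ∀ t ∈ Set.Icc ((k:ℝ)+1) ((k:ℝ)+2),
        |g ((k:ℝ)+1) - g t| ≤ 2 * (Cb * E * P) := by
      intro t ht
      have h1 : |g ((k:ℝ)+1) - g t| ≤ |g ((k:ℝ)+1)| + |g t| := abs_sub _ _
      apply h1.trans
      rw [_root_.abs_of_nonneg (rho_nonneg hd _), _root_.abs_of_nonneg (rho_nonneg hd _)]
      have h2 := hgleP ((k:ℝ)+1) ⟨le_rfl, by linarith⟩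
      have h3 := hgleP t ht
      linarith
    have hbd := interval_term_bound hd y v k (M := 2 * (Cb * E * P)) (by
      intro t ht
      have := hMb t ht
      simpa only [hg] using this)
    have hgn : g ((k:ℝ)+1) ≤ Cb * E * P := hgleP ((k:ℝ)+1) ⟨le_rfl, by linarith⟩
    have hgdiv : g ((k:ℝ)+1) / ((k:ℝ)+1) ≤ Cb * E * P :=
      (div_le_self (rho_nonneg hd _) hn1).trans hgn
    have hkey : (2 * (Cb * E * P) + g ((k:ℝ)+1) / ((k:ℝ)+1)) / ((k:ℝ)+2) ≤ 4 * Cb * E := by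
      have h2 : (2 * (Cb * E * P) + g ((k:ℝ)+1) / ((k:ℝ)+1)) / ((k:ℝ)+2)
          ≤ (3 * (Cb * E * P)) / ((k:ℝ)+2) := by gcongr ?_ / _; linarith
      apply h2.trans
      have h3 : P / ((k:ℝ)+2) = ((k:ℝ)+2) ^ (θ - 1) := by
        rw [hP, Real.rpow_sub (by positivity : (0:ℝ) < (k:ℝ)+2), Real.rpow_one]
      have h4 : ((k:ℝ)+2) ^ (θ - 1) ≤ 1 :=
        Real.rpow_le_one_of_one_le_of_nonpos (by linarith) (by linarith)
      have h5 : (3 * (Cb * E * P)) / ((k:ℝ)+2) = 3 * (Cb * E) * (P / ((k:ℝ)+2)) := by ring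
      rw [h5, h3]
      nlinarith [mul_nonneg hCb0.le hE0.le]
    exact hbd.trans hkey
  -- rewrite lamBruijn as a finite sum of interval terms
  have hsum_eq : (∑' m : ℕ+, ρ (v - Real.log m / Real.log y) / m)
      = ∑ k ∈ Finset.range N, g ((k:ℝ)+1) / ((k:ℝ)+1) := by
    rw [tsum_pnat_shift (fun x => ρ (v - Real.log x / Real.log y) / x)]
    apply tsum_eq_sum
    intro k hk
    have hkN : N ≤ k := by simpa [Finset.mem_range, not_lt] using hk
    have hky : y ^ v < (k:ℝ) + 1 := by
      have h1 : ((N:ℕ):ℝ) ≤ (k:ℝ) := by exact_mod_cast hkN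
      linarith
    rw [arg_neg hd hy hky, zero_div]
  have hFim : Measurable (fun t : ℝ => g t * (⌊t⌋ : ℝ) / t ^ 2) := by
    simp only [hg]
    exact (((rho_meas hd).comp (measurable_const.sub (Real.measurable_log.div_const _))).mul
      ((measurable_from_top (f := fun z : ℤ => (z:ℝ))).comp Int.measurable_floor)).div
      (measurable_id.pow_const 2)
  have hN1r : (1:ℝ) ≤ (N:ℝ) := by exact_mod_cast hN1
  have hFi_int : IntegrableOn (fun t : ℝ => g t * (⌊t⌋ : ℝ) / t ^ 2) (Set.Ioi 1) := by
    apply Integrable.mono' (g := Set.indicator (Set.Ioc 1 ((N:ℝ)+1)) fun _ => (1:ℝ))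
    · exact ((integrable_indicator_iff measurableSet_Ioc).2
        (integrableOn_const measure_Ioc_lt_top.ne)).integrableOn
    · exact hFim.aestronglyMeasurable
    · rw [ae_restrict_iff' measurableSet_Ioi]
      apply ae_of_all
      intro t ht
      have ht1 : (1:ℝ) < t := ht
      rcases le_or_gt t ((N:ℝ)+1) with h | h
      · have hmem : t ∈ Set.Ioc (1:ℝ) ((N:ℝ)+1) := ⟨ht1, h⟩
        rw [Set.indicator_of_mem hmem]
        have h0 : (0:ℝ) ≤ (⌊t⌋:ℝ) := by
          have : (0:ℤ) ≤ ⌊t⌋ := Int.floor_nonneg.2 (by linarith)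
          exact_mod_cast this
        have hft : (⌊t⌋:ℝ) ≤ t := Int.floor_le t
        rw [Real.norm_eq_abs, abs_div,
          _root_.abs_of_nonneg (mul_nonneg (rho_nonneg hd _) h0),
          _root_.abs_of_nonneg (by positivity : (0:ℝ) ≤ t^2), div_le_one (by positivity)]
        have hgle1 : g t ≤ 1 := rho_le_one hd _
        have hgge : 0 ≤ g t := rho_nonneg hd _
        nlinarith
      · have hyvt : y ^ v < t := lt_trans hNgt h
        have hzero : g t = 0 := by simp only [hg]; exact arg_neg hd hy hyvt
        rw [hzero]
        simp only [zero_mul, zero_div, norm_zero]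
        apply Set.indicator_nonneg
        intro x _
        exact zero_le_one
  have hsplit : (∫ t in Set.Ioi (1:ℝ), g t * (⌊t⌋:ℝ)/t^2)
      = ∫ t in Set.Ioc (1:ℝ) ((N:ℝ)+1), g t * (⌊t⌋:ℝ)/t^2 := by
    have hu : Set.Ioc (1:ℝ) ((N:ℝ)+1) ∪ Set.Ioi ((N:ℝ)+1) = Set.Ioi 1 :=
      Set.Ioc_union_Ioi_eq_Ioi (by linarith)
    rw [← hu, setIntegral_union (Set.Ioc_disjoint_Ioi le_rfl) measurableSet_Ioi
      (hFi_int.mono_set (hu ▸ Set.subset_union_left))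
      (hFi_int.mono_set (hu ▸ Set.subset_union_right))]
    have hz : ∫ t in Set.Ioi ((N:ℝ)+1), g t * (⌊t⌋:ℝ)/t^2 = 0 := by
      apply setIntegral_eq_zero_of_forall_eq_zero
      intro t ht
      have hzero : g t = 0 := by simp only [hg]; exact arg_neg hd hy (lt_trans hNgt ht)
      rw [hzero, zero_mul, zero_div]
    rw [hz, add_zero]
  have hadj : ∫ t in Set.Ioc (1:ℝ) ((N:ℝ)+1), g t * (⌊t⌋:ℝ)/t^2
      = ∑ k ∈ Finset.range N, ∫ t in ((k:ℝ)+1)..((k:ℝ)+2), g t * (⌊t⌋:ℝ)/t^2 := by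
    have hint : ∀ k < N, IntervalIntegrable (fun t => g t * (⌊t⌋:ℝ)/t^2) volume
        ((fun j : ℕ => ((j:ℝ)+1)) k) ((fun j : ℕ => ((j:ℝ)+1)) (k+1)) := by
      intro k _
      rw [intervalIntegrable_iff]
      apply hFi_int.mono_set
      intro x hx
      rw [Set.uIoc_of_le (by push_cast; linarith)] at hx
      have h1 : (1:ℝ) ≤ (k:ℝ)+1 := le_add_of_nonneg_left (Nat.cast_nonneg k)
      exact lt_of_le_of_lt h1 hx.1
    have hAI := intervalIntegral.sum_integral_adjacent_intervals
      (a := fun j : ℕ => ((j:ℝ)+1)) (n := N) hint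
    have heq2 : ∫ t in Set.Ioc (1:ℝ) ((N:ℝ)+1), g t * (⌊t⌋:ℝ)/t^2
        = ∫ t in (((0:ℕ):ℝ)+1)..(((N:ℕ):ℝ)+1), g t * (⌊t⌋:ℝ)/t^2 := by
      rw [intervalIntegral.integral_of_le (by push_cast; linarith)]
      norm_num
    rw [heq2, ← hAI]
    apply Finset.sum_congr rfl
    intro k _
    congr 1
    push_cast
    ring
  have hlam_eq : lamBruijn ρ y v = ∑ k ∈ Finset.range N,
      (g ((k:ℝ)+1) / ((k:ℝ)+1) - ∫ t in ((k:ℝ)+1)..((k:ℝ)+2), g t * (⌊t⌋ : ℝ) / t ^ 2) := by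
    rw [Finset.sum_sub_distrib]
    show (∑' m : ℕ+, ρ (v - Real.log m / Real.log y) / m)
      - (∫ t in Set.Ioi (1:ℝ), ρ (v - Real.log t / Real.log y) * (⌊t⌋ : ℝ) / t ^ 2) = _
    rw [hsum_eq]
    congr 1
    have : (∫ t in Set.Ioi (1:ℝ), ρ (v - Real.log t / Real.log y) * (⌊t⌋ : ℝ) / t ^ 2)
        = ∫ t in Set.Ioi (1:ℝ), g t * (⌊t⌋:ℝ)/t^2 := by simp only [hg]
    rw [this, hsplit, hadj]
  -- final assembly
  rw [hlam_eq]
  have habs := Finset.abs_sum_le_sum_abs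
    (fun k : ℕ => g ((k:ℝ)+1) / ((k:ℝ)+1)
      - ∫ t in ((k:ℝ)+1)..((k:ℝ)+2), g t * (⌊t⌋ : ℝ) / t ^ 2) (Finset.range N)
  apply habs.trans
  have hNm : N = (N-1) + 1 := (Nat.succ_pred_eq_of_pos (by omega)).symm
  rw [hNm, Finset.sum_range_succ]
  have hb1 : ∑ k ∈ Finset.range (N-1),
      |g ((k:ℝ)+1) / ((k:ℝ)+1) - ∫ t in ((k:ℝ)+1)..((k:ℝ)+2), g t * (⌊t⌋ : ℝ) / t ^ 2|
      ≤ K1 * E * Kθ := by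
    have hstep : ∀ k ∈ Finset.range (N-1),
        |g ((k:ℝ)+1) / ((k:ℝ)+1) - ∫ t in ((k:ℝ)+1)..((k:ℝ)+2), g t * (⌊t⌋ : ℝ) / t ^ 2|
        ≤ K1 * E * ((k:ℝ)+2) ^ (θ - 2) := by
      intro k hk
      apply hterm1
      have hk2 : k + 2 ≤ N := by
        have := Finset.mem_range.1 hk
        omega
      have : ((k:ℕ):ℝ) + 2 ≤ (N:ℝ) := by exact_mod_cast hk2
      linarith
    apply (Finset.sum_le_sum hstep).trans
    have : ∑ k ∈ Finset.range (N-1), K1 * E * ((k:ℝ)+2) ^ (θ - 2)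
        = K1 * E * ∑ k ∈ Finset.range (N-1), ((k:ℝ)+2) ^ (θ - 2) := by
      rw [Finset.mul_sum]
    rw [this]
    apply mul_le_mul_of_nonneg_left _ (by positivity)
    rw [hKθ]
    exact Summable.sum_le_tsum _ (fun k _ => Real.rpow_nonneg (by positivity) _) hsum
  have hb2 := hterm2 (N-1)
  have htotal : K1 * E * Kθ + 4 * Cb * E = (K1 * Kθ + 4 * Cb) * E := by ring
  linarith

end LamAux

/-- Corollary A.2. For `y ≥ C_ε`, the Laplace transform
`∫₀^∞ e^{−sv} λ_y(v) dv` converges absolutely for `Re s > −(log y)/(1+ε)`. -/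
theorem lambda_y_laplace_converges (dick : ℝ → ℝ) (hdick : IsDickman dick)
    (ε : ℝ) (hε : 0 < ε) :
    ∃ C : ℝ, 0 < C ∧
      ∀ y : ℝ, C ≤ y → ∀ s : ℂ, -(Real.log y) / (1 + ε) < s.re →
        MeasureTheory.IntegrableOn
          (fun v : ℝ => Complex.exp (-(s * v)) * (lamBruijn dick y v : ℂ))
          (Set.Ioi 0) := by
  refine ⟨2, by norm_num, ?_⟩
  intro y hy s hs
  have hy1 : (1:ℝ) < y := by linarith
  have hl0 : 0 < Real.log y := Real.log_pos hy1
  set b : ℝ := Real.log y / (1 + ε/2) with hb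
  have hb0 : 0 < b := by positivity
  have hbl : b < Real.log y := by
    rw [hb, div_lt_iff₀ (by linarith)]
    nlinarith
  obtain ⟨K, hK0, hKb⟩ := LamAux.lam_decay hdick hy hb0 hbl
  have hsb : 0 < s.re + b := by
    have h1 : Real.log y / (1 + ε) ≤ b := by
      rw [hb]
      gcongr <;> linarith
    have h2 : -(Real.log y) / (1 + ε) = -(Real.log y / (1 + ε)) := by ring
    rw [h2] at hs
    linarith
  apply Integrable.mono' (g := fun v => K * Real.exp (-((s.re + b) * v)))
  · have h3 := (exp_neg_integrableOn_Ioi 0 hsb).const_mul K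
    have heq : (fun v : ℝ => K * Real.exp (-((s.re + b) * v)))
        = fun x : ℝ => K * Real.exp (-(s.re + b) * x) := by
      funext x; rw [neg_mul]
    rw [heq]
    exact h3
  · apply Measurable.aestronglyMeasurable
    apply Measurable.mul
    · exact Complex.continuous_exp.measurable.comp
        ((measurable_const.mul Complex.measurable_ofReal).neg)
    · exact Complex.measurable_ofReal.comp (LamAux.lam_meas hdick hy)
  · rw [ae_restrict_iff' measurableSet_Ioi]
    apply ae_of_all
    intro v hv
    have hv0 : (0:ℝ) < v := hv
    have hnorm : ‖Complex.exp (-(s * v)) * ((lamBruijn dick y v : ℝ) : ℂ)‖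
        = Real.exp (-(s.re * v)) * |lamBruijn dick y v| := by
      rw [norm_mul, Complex.norm_exp,
        Complex.norm_real, Real.norm_eq_abs]
      congr 2
      simp [Complex.mul_re]
    rw [hnorm]
    calc Real.exp (-(s.re * v)) * |lamBruijn dick y v|
        ≤ Real.exp (-(s.re * v)) * (K * Real.exp (-(b * v))) :=
          mul_le_mul_of_nonneg_left (hKb v hv0) (Real.exp_pos _).le
      _ = K * Real.exp (-((s.re + b) * v)) := by
          rw [mul_left_comm, ← Real.exp_add,
            show -(s.re*v) + -(b*v) = -((s.re+b)*v) by ring]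


end
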